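/- Let δ > 0, E_c > 0, let n ≥ 1 be an integer, and set ξ = √(1 + 2E_c/δ). Then for every real x ≥ 2E_c + δ, |T_n((x − δ)/E_c − 1)| ≤ ((2x − 2δ)/E_c − 2)^n · e^{−2n/ξ} · T_n(1 + δ/E_c). -/

import Mathlib

open Polynomial

lemma sinh_le_mul_cosh {v : ℝ} (hv : 0 ≤ v) : Real.sinh v ≤ v * Real.cosh v := by
  have hd : ∀ z : ℝ, HasDerivAt (fun z => z * Real.cosh z - Real.sinh z) (z * Real.sinh z) z := by
    intro z
    have h1 := (hasDerivAt_id z).mul (Real.hasDerivAt_cosh z)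
    have h2 := Real.hasDerivAt_sinh z
    refine (h1.sub h2).congr_deriv ?_
    simp [id]
  have hmono : MonotoneOn (fun z : ℝ => z * Real.cosh z - Real.sinh z) (Set.Ici 0) := by
    apply monotoneOn_of_deriv_nonneg (convex_Ici 0)
    · exact Continuous.continuousOn (by continuity)
    · intro z hz
      exact (hd z).differentiableAt.differentiableWithinAt
    · intro z hz
      rw [(hd z).deriv]
      simp only [interior_Ici, Set.mem_Ioi] at hz
      exact mul_nonneg hz.le (Real.sinh_nonneg_iff.mpr hz.le)
  have := hmono (Set.self_mem_Ici) (Set.mem_Ici.mpr hv) hv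
  simp at this
  linarith

lemma cosh_le_ratio {u : ℝ} (hu0 : 0 ≤ u) (hu2 : u < 2) :
    Real.cosh u ≤ (4 + u^2) / (4 - u^2) := by
  have h1 : Real.cosh u = 2 * Real.sinh (u/2)^2 + 1 := by
    have := Real.cosh_two_mul (u/2)
    have h2 := Real.cosh_sq (u/2)
    rw [show 2 * (u/2) = u by ring] at this
    linarith
  have h3 : Real.sinh (u/2) ≤ (u/2) * Real.cosh (u/2) := sinh_le_mul_cosh (by linarith)
  have h4 : Real.cosh (u/2)^2 = (Real.cosh u + 1)/2 := by
    have := Real.cosh_two_mul (u/2)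
    have h2 := Real.cosh_sq (u/2)
    rw [show 2 * (u/2) = u by ring] at this
    linarith
  have h5 : 0 ≤ Real.sinh (u/2) := Real.sinh_nonneg_iff.mpr (by linarith)
  have h6 : Real.sinh (u/2)^2 ≤ (u/2)^2 * Real.cosh (u/2)^2 := by
    have := mul_self_le_mul_self h5 h3
    calc Real.sinh (u/2)^2 = Real.sinh (u/2) * Real.sinh (u/2) := sq _
    _ ≤ (u/2 * Real.cosh (u/2)) * (u/2 * Real.cosh (u/2)) := this
    _ = (u/2)^2 * Real.cosh (u/2)^2 := by ring
  rw [h4] at h6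
  rw [le_div_iff₀ (by nlinarith)]
  nlinarith [h1, h6]

lemma T_eval_cosh (s : ℝ) : ∀ n : ℕ, (Chebyshev.T ℝ (n : ℤ)).eval (Real.cosh s) = Real.cosh (n * s) := by
  intro n
  induction n using Nat.twoStepInduction with
  | zero => simp [Chebyshev.T_zero]
  | one => simp [Chebyshev.T_one]
  | more m ih1 ih2 =>
    have : ((m : ℤ) + 2 : ℤ) = ((m + 2 : ℕ) : ℤ) := by push_cast; ring
    rw [← this, Chebyshev.T_add_two]
    push_cast
    simp only [eval_sub, eval_mul, eval_ofNat, eval_X]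
    rw [show ((m:ℤ)+1 : ℤ) = ((m + 1 : ℕ) : ℤ) by push_cast; ring] at *
    rw [ih1, ih2]
    push_cast
    have ha := Real.cosh_add ((m+1) * s) s
    have hb := Real.cosh_sub ((m+1) * s) s
    rw [show ((m:ℝ)+1) * s + s = ((m:ℝ)+2) * s by ring] at ha
    rw [show ((m:ℝ)+1) * s - s = (m:ℝ) * s by ring] at hb
    linarith
set_option maxHeartbeats 1000000 in
theorem chebyshev_growth_bound (δ Ec : ℝ) (hδ : 0 < δ) (hEc : 0 < Ec)
    (n : ℕ) (hn : 1 ≤ n) (x : ℝ) (hx : 2 * Ec + δ ≤ x) :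
    |(Polynomial.Chebyshev.T ℝ n).eval ((x - δ) / Ec - 1)| ≤
      ((2 * x - 2 * δ) / Ec - 2) ^ n *
        Real.exp (-(2 * n) / Real.sqrt (1 + 2 * Ec / δ)) *
        (Polynomial.Chebyshev.T ℝ n).eval (1 + δ / Ec) := by
  set ξ := Real.sqrt (1 + 2 * Ec / δ) with hξdef
  have hξsq : ξ ^ 2 = 1 + 2 * Ec / δ := Real.sq_sqrt (by positivity)
  have hξnn : 0 ≤ ξ := Real.sqrt_nonneg _
  have hξ1 : 1 < ξ := by
    by_contra h
    push_neg at h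
    have h2 : 0 < 2 * Ec / δ := by positivity
    nlinarith
  set y := (x - δ) / Ec - 1 with hydef
  have hy : 1 ≤ y := by
    rw [hydef, le_sub_iff_add_le, le_div_iff₀ hEc]; linarith
  set a := 1 + δ / Ec with hadef
  have ha1 : 1 < a := by
    have : 0 < δ / Ec := by positivity
    rw [hadef]; linarith
  -- β and γ with cosh β = y, cosh γ = a
  set β := Real.arsinh (Real.sqrt (y ^ 2 - 1)) with hβdef
  set γ := Real.arsinh (Real.sqrt (a ^ 2 - 1)) with hγdef
  have hcoshβ : Real.cosh β = y := by
    rw [hβdef, Real.cosh_arsinh, Real.sq_sqrt (by nlinarith),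
      show 1 + (y ^ 2 - 1) = y ^ 2 by ring, Real.sqrt_sq (by linarith)]
  have hcoshγ : Real.cosh γ = a := by
    rw [hγdef, Real.cosh_arsinh, Real.sq_sqrt (by nlinarith),
      show 1 + (a ^ 2 - 1) = a ^ 2 by ring, Real.sqrt_sq (by linarith)]
  have hβ0 : 0 ≤ β := Real.arsinh_nonneg_iff.mpr (Real.sqrt_nonneg _)
  have hγ0 : 0 ≤ γ := Real.arsinh_nonneg_iff.mpr (Real.sqrt_nonneg _)
  -- the key: 2/ξ ≤ γ
  have hkey : 2 / ξ ≤ γ := by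
    have hu0 : (0:ℝ) ≤ 2 / ξ := by positivity
    have hu2 : 2 / ξ < 2 := by
      rw [div_lt_iff₀ (by linarith)]; nlinarith
    have hu2v : (2/ξ) ^ 2 = 4 * δ / (δ + 2 * Ec) := by
      rw [div_pow, hξsq, div_eq_div_iff (by positivity) (by positivity)]
      field_simp
      ring
    have hA : 4 + (2/ξ) ^ 2 = (8 * δ + 8 * Ec) / (δ + 2 * Ec) := by
      rw [hu2v]
      field_simp
      ring
    have hB : 4 - (2/ξ) ^ 2 = 8 * Ec / (δ + 2 * Ec) := by
      rw [hu2v]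
      field_simp
      ring
    have hratio : (4 + (2/ξ) ^ 2) / (4 - (2/ξ) ^ 2) = a := by
      rw [hA, hB, div_div_div_cancel_right₀, hadef]
      · field_simp
        ring
      · positivity
    have hcu : Real.cosh (2/ξ) ≤ Real.cosh γ := by
      rw [hcoshγ, ← hratio]
      exact cosh_le_ratio hu0 hu2
    have := Real.cosh_le_cosh.mp hcu
    rwa [abs_of_nonneg hu0, abs_of_nonneg hγ0] at this
  -- evaluations
  have hL : (Polynomial.Chebyshev.T ℝ n).eval y = Real.cosh (n * β) := by
    rw [← hcoshβ, T_eval_cosh]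
  have hR : (Polynomial.Chebyshev.T ℝ n).eval a = Real.cosh (n * γ) := by
    rw [← hcoshγ, T_eval_cosh]
  have hcoef : (2 * x - 2 * δ) / Ec - 2 = 2 * y := by
    rw [hydef]; field_simp
  -- left bound
  have hLb : Real.cosh (n * β) ≤ (2 * y) ^ n / 2 := by
    have e1 : Real.cosh ((n:ℝ) * β) = ((Real.exp β) ^ n + (Real.exp (-β)) ^ n) / 2 := by
      rw [Real.cosh_eq, ← Real.exp_nat_mul, show -((n:ℝ) * β) = (n:ℝ) * (-β) by ring,
        ← Real.exp_nat_mul]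
    rw [e1]
    have e2 : (Real.exp β) ^ n + (Real.exp (-β)) ^ n ≤ (Real.exp β + Real.exp (-β)) ^ n :=
      pow_add_pow_le (Real.exp_nonneg _) (Real.exp_nonneg _) (by omega)
    have e3 : Real.exp β + Real.exp (-β) = 2 * y := by
      rw [← hcoshβ, Real.cosh_eq]; ring
    rw [e3] at e2
    linarith
  -- right bound
  have hRb : (1:ℝ) / 2 ≤ Real.exp (-(2 * n) / ξ) * Real.cosh (n * γ) := by
    have hnγ : (2 * n) / ξ ≤ n * γ := by
      have hn1 : (1:ℝ) ≤ n := by exact_mod_cast hn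
      have : (2 * (n:ℝ)) / ξ = (n:ℝ) * (2 / ξ) := by ring
      rw [this]
      exact mul_le_mul_of_nonneg_left hkey (by linarith)
    have h1 : Real.exp ((n:ℝ) * γ) / 2 ≤ Real.cosh ((n:ℝ) * γ) := by
      rw [Real.cosh_eq]
      have := Real.exp_nonneg (-((n:ℝ) * γ))
      linarith
    calc (1:ℝ) / 2 = Real.exp (-(2 * n) / ξ) * (Real.exp ((2 * n) / ξ) / 2) := by
          rw [← mul_div_assoc, ← Real.exp_add]
          rw [show -(2 * (n:ℝ)) / ξ + (2 * n) / ξ = 0 by ring]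
          norm_num
      _ ≤ Real.exp (-(2 * n) / ξ) * (Real.exp ((n:ℝ) * γ) / 2) := by
          have h2 := Real.exp_le_exp.mpr hnγ
          have hp := Real.exp_nonneg (-(2 * (n:ℝ)) / ξ)
          apply mul_le_mul_of_nonneg_left _ hp
          linarith
      _ ≤ Real.exp (-(2 * n) / ξ) * Real.cosh ((n:ℝ) * γ) :=
          mul_le_mul_of_nonneg_left h1 (Real.exp_nonneg _)
  -- assemble
  rw [hL, hR, hcoef, abs_of_nonneg (Real.cosh_pos _).le, mul_assoc]
  calc Real.cosh ((n:ℝ) * β) ≤ (2 * y) ^ n / 2 := hLb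
    _ = (2 * y) ^ n * (1 / 2) := by ring
    _ ≤ (2 * y) ^ n * (Real.exp (-(2 * n) / ξ) * Real.cosh ((n:ℝ) * γ)) := by
        apply mul_le_mul_of_nonneg_left hRb (pow_nonneg (by linarith) n)
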